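/- Let n ≥ 2, m ≥ 3, and let P be an m-th order, n-dimensional stochastic tensor on S = {1,…,n}. If P is ergodic, then P is irreducible; that is, if for all i1,…,i_m ∈ S there exists k ≥ 1 with p^{(k)}_{i1 … i_m} > 0, then for every nonempty proper subset K of S there exist i1 ∈ K and i2,…,i_m ∈ S \ K with p_{i1 i2 … i_m} > 0. -/
import Mathlib


open Finset

/-- An `m`-th order, `n`-dimensional tensor with `m = r + 2`: the entry
`p_{i₁ i₂ … i_m}` is written `P i₁ t`, where `t = (i₂, …, i_m)` is the tail of
`m - 1 = r + 1` indices. -/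
abbrev HOTensor (n r : ℕ) := Fin n → (Fin (r + 1) → Fin n) → ℝ

/-- `P` is a stochastic tensor. -/
def IsStochasticT {n r : ℕ} (P : HOTensor n r) : Prop :=
  (∀ i t, 0 ≤ P i t ∧ P i t ≤ 1) ∧ ∀ t, ∑ i : Fin n, P i t = 1

/-- The product `A ⊠ B`:
`(A ⊠ B)_{i₁ i₂ … i_m} = Σ_j a_{i₁ j i₂ … i_{m-1}} b_{j i₂ … i_m}`. -/
def tmul {n r : ℕ} (A B : HOTensor n r) : HOTensor n r :=
  fun i t => ∑ j : Fin n, A i (Fin.cons j (Fin.init t)) * B j t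

/-- Tensor powers: `tpow P k` is `P^k`, with entries the `k`-step transition
probabilities `p^{(k)}_{i₁ … i_m}`; `P^0` is the identity tensor. -/
def tpow {n r : ℕ} (P : HOTensor n r) : ℕ → HOTensor n r
  | 0 => fun i t => if i = t 0 then 1 else 0
  | k + 1 => tmul (tpow P k) P

/-- `fpp P k` is the `(k+1)`-step first passage probability tensor `F^{[k+1]}`:
`f^{[1]} = p`, and `f^{[k+1]}_{i₁ i₂ … i_m} = Σ_{j ≠ i₁} f^{[k]}_{i₁ j i₂ … i_{m-1}} p_{j i₂ … i_m}`. -/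
def fpp {n r : ℕ} (P : HOTensor n r) : ℕ → HOTensor n r
  | 0 => P
  | k + 1 => fun i t =>
      ∑ j ∈ Finset.univ.filter (fun j => j ≠ i), fpp P k i (Fin.cons j (Fin.init t)) * P j t

/-- The ever-reaching probability `f_{i₁ i₂ … i_m} = Σ_{k=1}^∞ f^{[k]}_{i₁ i₂ … i_m}`. -/
noncomputable def everReach {n r : ℕ} (P : HOTensor n r) : HOTensor n r :=
  fun i t => ∑' k : ℕ, fpp P k i t

/-- State `j` is reachable from state `i` (`i → j`): for every choice of
`i₃, …, i_m` there is `k ≥ 0` with `p^{(k)}_{j i i₃ … i_m} > 0`. -/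
def Reach {n r : ℕ} (P : HOTensor n r) (i j : Fin n) : Prop :=
  ∀ u : Fin r → Fin n, ∃ k : ℕ, 0 < tpow P k j (Fin.cons i u)

/-- States `i` and `j` communicate (`i ↔ j`). -/
def Comm {n r : ℕ} (P : HOTensor n r) (i j : Fin n) : Prop :=
  Reach P i j ∧ Reach P j i

/-- State `i` is recurrent: `f_{i i i₃ … i_m} = 1` for all `i₃, …, i_m`. -/
def RecurrentState {n r : ℕ} (P : HOTensor n r) (i : Fin n) : Prop :=
  ∀ u : Fin r → Fin n, everReach P i (Fin.cons i u) = 1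

/-- State `i` is fully transient: `f_{i i i₃ … i_m} < 1` for all `i₃, …, i_m`. -/
def FullyTransientState {n r : ℕ} (P : HOTensor n r) (i : Fin n) : Prop :=
  ∀ u : Fin r → Fin n, everReach P i (Fin.cons i u) < 1

/-- `P` is ergodic: for all indices there is `k ≥ 1` with `p^{(k)}_{i₁ … i_m} > 0`. -/
def ErgodicT {n r : ℕ} (P : HOTensor n r) : Prop :=
  ∀ (i : Fin n) (t : Fin (r + 1) → Fin n), ∃ k : ℕ, 1 ≤ k ∧ 0 < tpow P k i t

/-- `P` is regular: some power `P^k`, `k ≥ 1`, has all entries positive. -/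
def RegularT {n r : ℕ} (P : HOTensor n r) : Prop :=
  ∃ k : ℕ, 1 ≤ k ∧ ∀ (i : Fin n) (t : Fin (r + 1) → Fin n), 0 < tpow P k i t

/-- The reduced transition matrix `Q` of `P`: rows and columns are indexed by
`(m-1)`-tuples; the entry in row `(i₁, …, i_{m-1})` and column `(j₁, …, j_{m-1})`
is `p_{i₁ i₂ … i_{m-1} j_{m-1}}` if `j_ℓ = i_{ℓ+1}` for `ℓ = 1, …, m-2`, else `0`. -/
def reducedT {n r : ℕ} (P : HOTensor n r) :
    Matrix (Fin (r + 1) → Fin n) (Fin (r + 1) → Fin n) ℝ :=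
  fun u v =>
    if ∀ ℓ : Fin r, v ℓ.castSucc = u ℓ.succ then
      P (u 0) (Fin.snoc (Fin.tail u) (v (Fin.last r)))
    else 0

lemma tpow_nonneg {n r : ℕ} (P : HOTensor n r) (hP : IsStochasticT P) :
    ∀ k i t, 0 ≤ tpow P k i t := by
  intro k
  induction k with
  | zero => intro i t; simp only [tpow]; positivity
  | succ k ih =>
    intro i t
    simp only [tpow, tmul]
    exact Finset.sum_nonneg fun j _ => mul_nonneg (ih _ _) (hP.1 j t).1

lemma reach_cross {n r : ℕ} (P : HOTensor n r) (hP : IsStochasticT P)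
    (K : Set (Fin n)) :
    ∀ k (i : Fin n) (t : Fin (r + 1) → Fin n), i ∈ K → (∀ ℓ, t ℓ ∉ K) →
      0 < tpow P k i t →
      ∃ i₁ ∈ K, ∃ t' : Fin (r + 1) → Fin n, (∀ ℓ, t' ℓ ∉ K) ∧ 0 < P i₁ t' := by
  intro k
  induction k with
  | zero =>
    intro i t hi ht hpos
    simp only [tpow] at hpos
    split at hpos
    · next h => exact absurd (h ▸ hi) (ht 0)
    · exact absurd hpos (lt_irrefl 0)
  | succ k ih =>
    intro i t hi ht hpos
    simp only [tpow, tmul] at hpos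
    have : ∃ j : Fin n, 0 < tpow P k i (Fin.cons j (Fin.init t)) * P j t := by
      by_contra h
      push_neg at h
      have := Finset.sum_nonpos (fun j (_ : j ∈ Finset.univ) => h j)
      linarith
    obtain ⟨j, hj⟩ := this
    have h1 : 0 < tpow P k i (Fin.cons j (Fin.init t)) ∧ 0 < P j t := by
      rcases mul_pos_iff.mp hj with h | h
      · exact h
      · exact absurd h.1 (not_lt.mpr (tpow_nonneg P hP k i _))
    by_cases hjK : j ∈ K
    · exact ⟨j, hjK, t, ht, h1.2⟩
    · refine ih i (Fin.cons j (Fin.init t)) hi ?_ h1.1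
      intro ℓ
      refine Fin.cases ?_ ?_ ℓ
      · exact hjK
      · intro p; exact ht p.castSucc

/-- an ergodic higher order chain is irreducible: for every nonempty
proper `K ⊊ S` there are `i₁ ∈ K` and `i₂, …, i_m ∈ S \ K` with `p_{i₁ i₂ … i_m} > 0`. -/
theorem ergodic_implies_irreducible (n r : ℕ) (hn : 2 ≤ n) (hr : 1 ≤ r)
    (P : HOTensor n r) (hP : IsStochasticT P) (herg : ErgodicT P) :
    ∀ K : Set (Fin n), K.Nonempty → K ≠ Set.univ →
      ∃ i₁ ∈ K, ∃ t : Fin (r + 1) → Fin n, (∀ ℓ, t ℓ ∉ K) ∧ 0 < P i₁ t := by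
  intro K hne hKuniv
  obtain ⟨i, hi⟩ := hne
  have : ∃ a, a ∉ K := by
    by_contra h
    push_neg at h
    exact hKuniv (Set.eq_univ_of_forall h)
  obtain ⟨a, ha⟩ := this
  obtain ⟨k, -, hpos⟩ := herg i (fun _ => a)
  exact reach_cross P hP K k i (fun _ => a) hi (fun _ => ha) hpos
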